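/- Define A : ℝ² → ℝ^{2×2} and b : ℝ² → ℝ² by A(y) := [[1 + arcsin(sin²(π y₁)), (1/2)sin(2π y₁)], [(1/2)sin(2π y₁), 2 + cos²(π y₁)]] and b(y) := sign(sin(2π y₁))·(1,1) for y = (y₁,y₂) ∈ ℝ², where sign(t) equals 1 if t > 0, −1 if t < 0, and 0 if t = 0. Define K(t) := ∫₀ᵗ sign(sin(2πx))/(1 + arcsin(sin²(πx))) dx, C₁ := ∫₀¹ e^{K(t)}/(1 + arcsin(sin²(πt))) dt, and r(y) := C₁⁻¹ · e^{K(y₁)}/(1 + arcsin(sin²(π y₁))) for y = (y₁,y₂) ∈ ℝ². Then r is ℤ²-periodic and positive, ∫_{(0,1)²} r = 1, and ∫_{(0,1)²} r(y)·(A(y):D²φ(y) + b(y)·∇φ(y)) dy = 0 for every twice continuously differentiable ℤ²-periodic function φ : ℝ² → ℝ; that is, r is the invariant measure associated with (A,b). -/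

import Mathlib

open MeasureTheory

noncomputable section

/-- The unit cell `Y = (0,1)^n`. -/
def unitCell (n : ℕ) : Set (Fin n → ℝ) := Set.univ.pi fun _ => Set.Ioo (0 : ℝ) 1

/-- Frobenius norm squared of a matrix. -/
def frobSq {n : ℕ} (M : Matrix (Fin n) (Fin n) ℝ) : ℝ := ∑ i, ∑ j, (M i j) ^ 2

/-- Frobenius inner product of two matrices. -/
def frobInner {n : ℕ} (M N : Matrix (Fin n) (Fin n) ℝ) : ℝ := ∑ i, ∑ j, M i j * N i j

/-- Euclidean norm squared of a vector. -/
def euclSq {n : ℕ} (v : Fin n → ℝ) : ℝ := ∑ i, (v i) ^ 2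

/-- Euclidean dot product. -/
def dotc {n : ℕ} (v w : Fin n → ℝ) : ℝ := ∑ i, v i * w i

/-- `ℤⁿ`-periodicity of a function on `ℝⁿ`. -/
def IsPeriodic {n : ℕ} {α : Type*} (f : (Fin n → ℝ) → α) : Prop :=
  ∀ (x : Fin n → ℝ) (k : Fin n → ℤ), f (x + fun i => (k i : ℝ)) = f x

/-- Partial derivative in direction `i`. -/
def pd {n : ℕ} (f : (Fin n → ℝ) → ℝ) (i : Fin n) (x : Fin n → ℝ) : ℝ :=
  fderiv ℝ f x (Pi.single i 1)

/-- Gradient. -/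
def grad {n : ℕ} (f : (Fin n → ℝ) → ℝ) (x : Fin n → ℝ) : Fin n → ℝ := fun i => pd f i x

/-- Hessian matrix. -/
def hess {n : ℕ} (f : (Fin n → ℝ) → ℝ) (x : Fin n → ℝ) : Matrix (Fin n) (Fin n) ℝ :=
  Matrix.of fun i j => pd (pd f j) i x

/-- Laplacian. -/
def lap {n : ℕ} (f : (Fin n → ℝ) → ℝ) (x : Fin n → ℝ) : ℝ := ∑ i, pd (pd f i) i x

/-- Jacobian matrix of a vector field: `(jac w x) i j = ∂_j w_i (x)`. -/
def jac {n : ℕ} (w : (Fin n → ℝ) → Fin n → ℝ) (x : Fin n → ℝ) : Matrix (Fin n) (Fin n) ℝ :=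
  Matrix.of fun i j => pd (fun y => w y i) j x

/-- Divergence of a vector field. -/
def divg {n : ℕ} (w : (Fin n → ℝ) → Fin n → ℝ) (x : Fin n → ℝ) : ℝ :=
  ∑ i, pd (fun y => w y i) i x

/-- Setting B: symmetric-valued, measurable, `ℤⁿ`-periodic, essentially bounded coefficients,
uniform ellipticity, and the Cordes-type condition with constant `δ ∈ (n/(n+π²), 1]`. -/
structure SettingB {n : ℕ} (A : (Fin n → ℝ) → Matrix (Fin n) (Fin n) ℝ)
    (b : (Fin n → ℝ) → Fin n → ℝ) (lam Lam δ : ℝ) : Prop where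
  symm : ∀ x, (A x).IsSymm
  measA : ∀ i j, Measurable fun x => A x i j
  measb : ∀ i, Measurable fun x => b x i
  perA : IsPeriodic A
  perb : IsPeriodic b
  bddA : ∃ C : ℝ, ∀ᵐ x ∂(volume : Measure (Fin n → ℝ)), frobSq (A x) ≤ C
  bddb : ∃ C : ℝ, ∀ᵐ x ∂(volume : Measure (Fin n → ℝ)), euclSq (b x) ≤ C
  lam_pos : 0 < lam
  lam_le_Lam : lam ≤ Lam
  ellip : ∀ᵐ x ∂(volume : Measure (Fin n → ℝ)), ∀ ξ : Fin n → ℝ,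
    lam * euclSq ξ ≤ dotc ξ (Matrix.mulVec (A x) ξ) ∧
      dotc ξ (Matrix.mulVec (A x) ξ) ≤ Lam * euclSq ξ
  delta_mem : δ ∈ Set.Ioc ((n : ℝ) / ((n : ℝ) + Real.pi ^ 2)) 1
  cordes : ∀ᵐ x ∂(volume : Measure (Fin n → ℝ)),
    (frobSq (A x) + euclSq (b x)) / (Matrix.trace (A x)) ^ 2 ≤ 1 / ((n : ℝ) - 1 + δ)

/-- The renormalization function `γ = tr A / (|A|² + |b|²)`. -/
def gam {n : ℕ} (A : (Fin n → ℝ) → Matrix (Fin n) (Fin n) ℝ)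
    (b : (Fin n → ℝ) → Fin n → ℝ) (x : Fin n → ℝ) : ℝ :=
  Matrix.trace (A x) / (frobSq (A x) + euclSq (b x))

/-- The constant `κ = (δ − n/(n+π²))·(n+π²)/π²`. -/
def kappa (n : ℕ) (δ : ℝ) : ℝ :=
  (δ - (n : ℝ) / ((n : ℝ) + Real.pi ^ 2)) * (((n : ℝ) + Real.pi ^ 2) / Real.pi ^ 2)

/-- The invariant measure: measurable, `ℤⁿ`-periodic, square-integrable over `Y`,
with unit mass over `Y`, solving the stationary FPK equation in the very weak sense. -/
def IsInvariantMeasure {n : ℕ} (A : (Fin n → ℝ) → Matrix (Fin n) (Fin n) ℝ)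
    (b : (Fin n → ℝ) → Fin n → ℝ) (r : (Fin n → ℝ) → ℝ) : Prop :=
  Measurable r ∧ IsPeriodic r ∧
    IntegrableOn (fun x => (r x) ^ 2) (unitCell n) ∧
    (∫ x in unitCell n, r x) = 1 ∧
    ∀ φ : (Fin n → ℝ) → ℝ, ContDiff ℝ 2 φ → IsPeriodic φ →
      (∫ x in unitCell n,
        r x * (frobInner (A x) (hess φ x) + dotc (b x) (grad φ x))) = 0

/-- The bilinear form `B₂`. -/
def B2 {n : ℕ} (A : (Fin n → ℝ) → Matrix (Fin n) (Fin n) ℝ)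
    (b : (Fin n → ℝ) → Fin n → ℝ) (v w : (Fin n → ℝ) → Fin n → ℝ) : ℝ :=
  (∫ x in unitCell n,
    divg v x * (frobInner (gam A b x • A x) (jac w x) + dotc (gam A b x • b x) (w x)))
  + (1 / 2) * ∫ x in unitCell n,
      frobInner (jac v x - (jac v x).transpose) (jac w x - (jac w x).transpose)

/-- The diffusion matrix of the first numerical experiment (Setting A). -/
def Aex19 (y : Fin 2 → ℝ) : Matrix (Fin 2) (Fin 2) ℝ :=
  Matrix.of
    ![![1 + Real.arcsin (Real.sin (Real.pi * y 0) ^ 2),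
        (1 / 2) * Real.sin (2 * Real.pi * y 0)],
      ![(1 / 2) * Real.sin (2 * Real.pi * y 0),
        2 + Real.cos (Real.pi * y 0) ^ 2]]

/-- The drift of the first numerical experiment (Setting A). -/
def bex19 (y : Fin 2 → ℝ) : Fin 2 → ℝ :=
  fun _ => Real.sign (Real.sin (2 * Real.pi * y 0))

/-- `K(t) = ∫₀ᵗ sign(sin(2πx))/(1 + arcsin(sin²(πx))) dx`. -/
def Kex19 (t : ℝ) : ℝ :=
  ∫ x in (0 : ℝ)..t,
    Real.sign (Real.sin (2 * Real.pi * x))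
      / (1 + Real.arcsin (Real.sin (Real.pi * x) ^ 2))

/-- `C₁ = ∫₀¹ e^{K(t)}/(1 + arcsin(sin²(πt))) dt`. -/
def C1ex19 : ℝ :=
  ∫ t in (0 : ℝ)..1,
    Real.exp (Kex19 t) / (1 + Real.arcsin (Real.sin (Real.pi * t) ^ 2))

/-- `r(y) = C₁⁻¹ e^{K(y₁)}/(1 + arcsin(sin²(π y₁)))`. -/
def rex19 (y : Fin 2 → ℝ) : ℝ :=
  C1ex19⁻¹ * (Real.exp (Kex19 (y 0)) / (1 + Real.arcsin (Real.sin (Real.pi * y 0) ^ 2)))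


/-! ### Auxiliary material for the proof of `stmt_19` -/

section Ex19Aux

open Real Set intervalIntegral

/-- `a(t) = 1 + arcsin (sin²(π t))`. -/
private def aF (t : ℝ) : ℝ := 1 + Real.arcsin (Real.sin (Real.pi * t) ^ 2)
private def sF (t : ℝ) : ℝ := Real.sign (Real.sin (2 * Real.pi * t))
private def gF (t : ℝ) : ℝ := sF t / aF t
private def hF (t : ℝ) : ℝ := Real.exp (Kex19 t) / aF t

private lemma one_le_aF (t : ℝ) : 1 ≤ aF t := by
  have : (0:ℝ) ≤ Real.arcsin (Real.sin (Real.pi * t) ^ 2) :=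
    Real.arcsin_nonneg.2 (sq_nonneg _)
  simp only [aF]; linarith

private lemma aF_pos (t : ℝ) : 0 < aF t := lt_of_lt_of_le one_pos (one_le_aF t)

private lemma aF_ne (t : ℝ) : aF t ≠ 0 := (aF_pos t).ne'

private lemma continuous_aF : Continuous aF := by
  unfold aF
  exact continuous_const.add (Real.continuous_arcsin.comp
    ((Real.continuous_sin.comp (continuous_const.mul continuous_id)).pow 2))

private lemma measurable_sign : Measurable Real.sign := by
  unfold Real.sign
  refine Measurable.ite ?_ measurable_const (Measurable.ite ?_ measurable_const measurable_const)
  · exact measurableSet_lt measurable_id measurable_const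
  · exact measurableSet_lt measurable_const measurable_id

private lemma measurable_sF : Measurable sF := by
  apply measurable_sign.comp; fun_prop

private lemma abs_sign_le (x : ℝ) : |Real.sign x| ≤ 1 := by
  rcases Real.sign_apply_eq x with h | h | h <;> rw [h] <;> norm_num

private lemma abs_gF_le (t : ℝ) : |gF t| ≤ 1 := by
  rw [gF, abs_div]
  calc |sF t| / |aF t| ≤ 1 / 1 := by
        apply div_le_div₀ (by norm_num) (abs_sign_le _) one_pos
        rw [abs_of_pos (aF_pos t)]; exact one_le_aF t
    _ = 1 := by norm_num

private lemma measurable_gF : Measurable gF := measurable_sF.div (continuous_aF.measurable)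

private lemma gF_intInt (a b : ℝ) : IntervalIntegrable gF volume a b := by
  apply IntervalIntegrable.mono_fun' (g := fun _ => (1:ℝ)) intervalIntegrable_const
    measurable_gF.aestronglyMeasurable
  exact Filter.Eventually.of_forall fun t => abs_gF_le t

private lemma Kex19_eq (t : ℝ) : Kex19 t = ∫ x in (0:ℝ)..t, gF x := rfl

private lemma continuous_K : Continuous Kex19 := by
  have := intervalIntegral.continuous_primitive gF_intInt 0
  exact this

private lemma gF_per : Function.Periodic gF 1 := by
  intro t
  have h1 : Real.sin (2 * Real.pi * (t + 1)) = Real.sin (2 * Real.pi * t) := by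
    have : 2 * Real.pi * (t + 1) = 2 * Real.pi * t + 2 * Real.pi := by ring
    rw [this, Real.sin_add_two_pi]
  have h2 : Real.sin (Real.pi * (t + 1)) ^ 2 = Real.sin (Real.pi * t) ^ 2 := by
    have : Real.pi * (t + 1) = Real.pi * t + Real.pi := by ring
    rw [this, Real.sin_add_pi, neg_sq]
  simp [gF, sF, aF, h1, h2]

private lemma gF_refl (t : ℝ) : gF (1 - t) = - gF t := by
  have h1 : Real.sin (2 * Real.pi * (1 - t)) = - Real.sin (2 * Real.pi * t) := by
    have : 2 * Real.pi * (1 - t) = -(2 * Real.pi * t) + 2 * Real.pi := by ring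
    rw [this, Real.sin_add_two_pi, Real.sin_neg]
  have h2 : Real.sin (Real.pi * (1 - t)) ^ 2 = Real.sin (Real.pi * t) ^ 2 := by
    have : Real.pi * (1 - t) = Real.pi - Real.pi * t := by ring
    rw [this, Real.sin_pi_sub]
  rw [gF, gF, sF, sF, aF, aF, h1, h2, Real.sign_neg, neg_div]

private lemma int_gF_01 : (∫ x in (0:ℝ)..1, gF x) = 0 := by
  have h := intervalIntegral.integral_comp_sub_left (a := 0) (b := 1) gF 1
  simp only [sub_zero, sub_self] at h
  have h2 : (∫ x in (0:ℝ)..1, gF (1 - x)) = ∫ x in (0:ℝ)..1, - gF x := by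
    congr 1; ext x; exact gF_refl x
  rw [h2, intervalIntegral.integral_neg] at h
  linarith

private lemma K_zero : Kex19 0 = 0 := by rw [Kex19_eq, intervalIntegral.integral_same]

private lemma K_one : Kex19 1 = 0 := int_gF_01

private lemma K_per : Function.Periodic Kex19 1 := by
  intro t
  have hadd : Kex19 t + (∫ x in t..(t+1), gF x) = Kex19 (t + 1) := by
    rw [Kex19_eq, Kex19_eq]
    exact intervalIntegral.integral_add_adjacent_intervals (gF_intInt 0 t) (gF_intInt t (t+1))
  have hper : (∫ x in t..(t+1), gF x) = ∫ x in (0:ℝ)..(0+1), gF x :=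
    gF_per.intervalIntegral_add_eq t 0
  rw [← hadd, hper]
  simp [int_gF_01]

private lemma continuous_hF : Continuous hF :=
  (Real.continuous_exp.comp continuous_K).div continuous_aF (fun t => aF_ne t)

private lemma hF_pos (t : ℝ) : 0 < hF t := div_pos (Real.exp_pos _) (aF_pos t)

private lemma hF_per : Function.Periodic hF 1 := by
  intro t; rw [hF, hF, K_per t]
  congr 1
  have h2 : Real.sin (Real.pi * (t + 1)) ^ 2 = Real.sin (Real.pi * t) ^ 2 := by
    have : Real.pi * (t + 1) = Real.pi * t + Real.pi := by ring
    rw [this, Real.sin_add_pi, neg_sq]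
  rw [aF, aF, h2]

private lemma C1_eq : C1ex19 = ∫ t in (0:ℝ)..1, hF t := rfl

private lemma C1_pos : 0 < C1ex19 := by
  rw [C1_eq]
  exact intervalIntegral.intervalIntegral_pos_of_pos_on
    (continuous_hF.intervalIntegrable 0 1) (fun x _ => hF_pos x) one_pos

private lemma continuousAt_gF {t : ℝ} (ht : Real.sin (2 * Real.pi * t) ≠ 0) :
    ContinuousAt gF t := by
  have hc : Continuous fun x => Real.sin (2 * Real.pi * x) := by fun_prop
  have hsF : ∀ᶠ x in nhds t, sF x = sF t := by
    rcases ht.lt_or_gt with h | h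
    · have : ∀ᶠ x in nhds t, Real.sin (2 * Real.pi * x) < 0 :=
        hc.continuousAt.eventually_lt continuousAt_const h
      filter_upwards [this] with x hx
      rw [sF, sF, Real.sign_of_neg hx, Real.sign_of_neg h]
    · have : ∀ᶠ x in nhds t, 0 < Real.sin (2 * Real.pi * x) :=
        continuousAt_const.eventually_lt hc.continuousAt h
      filter_upwards [this] with x hx
      rw [sF, sF, Real.sign_of_pos hx, Real.sign_of_pos h]
  have hs : ContinuousAt sF t := by
    apply continuousAt_const.congr
    exact Filter.eventuallyEq_of_mem hsF (fun x hx => hx.symm)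
  exact hs.div continuous_aF.continuousAt (aF_ne t)

private lemma hasDerivAt_K {t : ℝ} (ht : Real.sin (2 * Real.pi * t) ≠ 0) :
    HasDerivAt Kex19 (gF t) t := by
  have := intervalIntegral.integral_hasDerivAt_right (gF_intInt 0 t)
    measurable_gF.stronglyMeasurable.stronglyMeasurableAtFilter
    (continuousAt_gF ht)
  exact this

private lemma hasDerivAt_expK {t : ℝ} (ht : Real.sin (2 * Real.pi * t) ≠ 0) :
    HasDerivAt (fun u => Real.exp (Kex19 u)) (Real.exp (Kex19 t) * gF t) t :=
  (Real.hasDerivAt_exp (Kex19 t)).comp t (hasDerivAt_K ht)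

private lemma hF_mul_aF (t : ℝ) : hF t * aF t = Real.exp (Kex19 t) :=
  div_mul_cancel₀ _ (aF_ne t)

private lemma hF_mul_sF (t : ℝ) : hF t * sF t = Real.exp (Kex19 t) * gF t := by
  rw [hF, gF]; field_simp

/-! ### Two-dimensional machinery -/

/-- Embedding of `ℝ × ℝ` into `Fin 2 → ℝ`. -/
private def mve (p : ℝ × ℝ) : Fin 2 → ℝ := ![p.1, p.2]

private lemma continuous_mve : Continuous mve := by
  apply continuous_pi
  intro i
  fin_cases i
  · exact continuous_fst
  · exact continuous_snd

private lemma single_zero_eq : (Pi.single (0 : Fin 2) (1:ℝ)) = ![1, 0] := by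
  funext i; fin_cases i <;> simp [Pi.single_apply]

private lemma single_one_eq : (Pi.single (1 : Fin 2) (1:ℝ)) = ![0, 1] := by
  funext i; fin_cases i <;> simp [Pi.single_apply]

private lemma hasDerivAt_curve_fst (σ t : ℝ) :
    HasDerivAt (fun u => mve (u, σ)) (Pi.single (0 : Fin 2) (1:ℝ)) t := by
  rw [single_zero_eq, hasDerivAt_pi]
  intro i
  fin_cases i
  · simpa [mve] using hasDerivAt_id' t
  · simpa [mve] using hasDerivAt_const t σ

private lemma hasDerivAt_curve_snd (t σ : ℝ) :
    HasDerivAt (fun u => mve (t, u)) (Pi.single (1 : Fin 2) (1:ℝ)) σ := by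
  rw [single_one_eq, hasDerivAt_pi]
  intro i
  fin_cases i
  · simpa [mve] using hasDerivAt_const σ t
  · simpa [mve] using hasDerivAt_id' σ

private lemma hasDerivAt_comp_fst {f : (Fin 2 → ℝ) → ℝ} (hf : Differentiable ℝ f) (t σ : ℝ) :
    HasDerivAt (fun u => f (mve (u, σ))) (pd f 0 (mve (t, σ))) t :=
  (hf (mve (t, σ))).hasFDerivAt.comp_hasDerivAt t (hasDerivAt_curve_fst σ t)

private lemma hasDerivAt_comp_snd {f : (Fin 2 → ℝ) → ℝ} (hf : Differentiable ℝ f) (t σ : ℝ) :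
    HasDerivAt (fun u => f (mve (t, u))) (pd f 1 (mve (t, σ))) σ :=
  (hf (mve (t, σ))).hasFDerivAt.comp_hasDerivAt σ (hasDerivAt_curve_snd t σ)

private lemma contDiff_pd {f : (Fin 2 → ℝ) → ℝ} (hf : ContDiff ℝ 2 f) (i : Fin 2) :
    ContDiff ℝ 1 (pd f i) := by
  have h1 : ContDiff ℝ 1 (fderiv ℝ f) := hf.fderiv_right (by norm_num)
  exact (ContinuousLinearMap.apply ℝ ℝ (Pi.single i 1)).contDiff.comp h1

private lemma continuous_pd {f : (Fin 2 → ℝ) → ℝ} (hf : ContDiff ℝ 1 f) (i : Fin 2) :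
    Continuous (pd f i) := by
  have h1 : Continuous (fderiv ℝ f) := hf.continuous_fderiv (by norm_num)
  exact (ContinuousLinearMap.apply ℝ ℝ (Pi.single i 1)).continuous.comp h1

private lemma fderiv_shift {f : (Fin 2 → ℝ) → ℝ} (hd : Differentiable ℝ f) (c : Fin 2 → ℝ)
    (hf : ∀ y, f (y + c) = f y) (x : Fin 2 → ℝ) :
    fderiv ℝ f (x + c) = fderiv ℝ f x := by
  have htr : HasFDerivAt (fun y : Fin 2 → ℝ => y + c)
      (ContinuousLinearMap.id ℝ (Fin 2 → ℝ)) x := (hasFDerivAt_id x).add_const c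
  have h1 : HasFDerivAt (fun y => f (y + c))
      ((fderiv ℝ f (x + c)).comp (ContinuousLinearMap.id ℝ (Fin 2 → ℝ))) x :=
    (hd (x + c)).hasFDerivAt.comp x htr
  have h2 : (fun y => f (y + c)) = f := funext hf
  rw [h2, ContinuousLinearMap.comp_id] at h1
  rw [← h1.fderiv]

private lemma pd_shift {f : (Fin 2 → ℝ) → ℝ} (hd : Differentiable ℝ f) (c : Fin 2 → ℝ)
    (hf : ∀ y, f (y + c) = f y) (x : Fin 2 → ℝ) (i : Fin 2) :
    pd f i (x + c) = pd f i x := by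
  rw [pd, pd, fderiv_shift hd c hf x]

private lemma pd_symm {f : (Fin 2 → ℝ) → ℝ} (hf : ContDiff ℝ 2 f) (x : Fin 2 → ℝ) :
    pd (pd f 1) 0 x = pd (pd f 0) 1 x := by
  have hd : Differentiable ℝ f := hf.differentiable (by norm_num)
  have h1 : ContDiff ℝ 1 (fderiv ℝ f) := hf.fderiv_right (by norm_num)
  have hx : HasFDerivAt (fderiv ℝ f) (fderiv ℝ (fderiv ℝ f) x) x :=
    ((h1.differentiable (by norm_num)) x).hasFDerivAt
  have key := second_derivative_symmetric (fun y => (hd y).hasFDerivAt) hx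
  have heval : ∀ i j : Fin 2, pd (pd f j) i x
      = fderiv ℝ (fderiv ℝ f) x (Pi.single i 1) (Pi.single j 1) := by
    intro i j
    have hc : DifferentiableAt ℝ (fderiv ℝ f) x := (h1.differentiable (by norm_num)) x
    have hu : DifferentiableAt ℝ (fun _ : Fin 2 → ℝ => (Pi.single j (1:ℝ) : Fin 2 → ℝ)) x :=
      by exact differentiableAt_const _
    have he : pd (pd f j) i x = fderiv ℝ (fun y => (fderiv ℝ f y) (Pi.single j (1:ℝ))) x
        (Pi.single i 1) := rfl
    rw [he, fderiv_clm_apply hc hu]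
    simp [ContinuousLinearMap.flip_apply]
  rw [heval 0 1, heval 1 0, key]

/-! ### Integration over the unit cell -/

private abbrev μI : Measure ℝ := volume.restrict (Set.Ioo (0:ℝ) 1)

private lemma mve_symm_eq :
    ∀ p : ℝ × ℝ, (MeasurableEquiv.finTwoArrow : (Fin 2 → ℝ) ≃ᵐ ℝ × ℝ).symm p = mve p := by
  intro p
  funext i
  fin_cases i <;> rfl

private lemma integral_unitCell_eq (F : (Fin 2 → ℝ) → ℝ) :
    (∫ y in unitCell 2, F y) = ∫ p, F (mve p) ∂(μI.prod μI) := by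
  have hmp : MeasurePreserving
      (MeasurableEquiv.finTwoArrow : (Fin 2 → ℝ) ≃ᵐ ℝ × ℝ).symm volume volume :=
    (volume_preserving_finTwoArrow ℝ).symm _
  have h := hmp.setIntegral_preimage_emb
    (MeasurableEquiv.measurableEmbedding _) F (unitCell 2)
  have hpre : (MeasurableEquiv.finTwoArrow : (Fin 2 → ℝ) ≃ᵐ ℝ × ℝ).symm ⁻¹' unitCell 2
      = Set.Ioo (0:ℝ) 1 ×ˢ Set.Ioo (0:ℝ) 1 := by
    ext p
    simp only [Set.mem_preimage, mve_symm_eq, unitCell, Set.mem_pi, Set.mem_univ,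
      forall_true_left, Set.mem_prod]
    constructor
    · intro h; exact ⟨h 0, h 1⟩
    · rintro ⟨h1, h2⟩ i; fin_cases i
      · exact h1
      · exact h2
  rw [hpre] at h
  rw [← h]
  have hmeq : (volume : Measure (ℝ × ℝ)).restrict (Set.Ioo (0:ℝ) 1 ×ˢ Set.Ioo (0:ℝ) 1)
      = μI.prod μI := by
    rw [Measure.volume_eq_prod, Measure.prod_restrict]
  rw [← hmeq]
  apply setIntegral_congr_fun (measurableSet_Ioo.prod measurableSet_Ioo)
  intro p _
  simp only [mve_symm_eq]

private instance : IsFiniteMeasure μI := by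
  constructor
  rw [Measure.restrict_apply_univ]
  simp

private lemma integrable_aux (u v : ℝ × ℝ → ℝ) (hu : Continuous u) (hv : Continuous v) :
    Integrable (fun p => u p + sF p.1 * v p) (μI.prod μI) := by
  have hmeas : Measurable (fun p : ℝ × ℝ => u p + sF p.1 * v p) :=
    hu.measurable.add ((measurable_sF.comp measurable_fst).mul hv.measurable)
  have hrw : μI.prod μI = (volume : Measure (ℝ × ℝ)).restrict
      (Set.Ioo (0:ℝ) 1 ×ˢ Set.Ioo (0:ℝ) 1) := by
    rw [Measure.volume_eq_prod, Measure.prod_restrict]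
  rw [hrw]
  have hK : IsCompact (Set.Icc (0:ℝ) 1 ×ˢ Set.Icc (0:ℝ) 1) := isCompact_Icc.prod isCompact_Icc
  obtain ⟨Cu, hCu⟩ := hK.exists_bound_of_continuousOn hu.continuousOn
  obtain ⟨Cv, hCv⟩ := hK.exists_bound_of_continuousOn hv.continuousOn
  apply Measure.integrableOn_of_bounded (M := Cu + Cv)
  · rw [Measure.volume_eq_prod, Measure.prod_prod]
    simp
  · exact hmeas.aestronglyMeasurable
  · rw [ae_restrict_iff' (measurableSet_Ioo.prod measurableSet_Ioo)]
    apply ae_of_all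
    rintro p ⟨hp1, hp2⟩
    have hmem : p ∈ Set.Icc (0:ℝ) 1 ×ˢ Set.Icc (0:ℝ) 1 :=
      ⟨⟨hp1.1.le, hp1.2.le⟩, ⟨hp2.1.le, hp2.2.le⟩⟩
    have h1 := hCu p hmem
    have h2 := hCv p hmem
    have h3 : |sF p.1| ≤ 1 := abs_sign_le _
    have h5 : ‖u p + sF p.1 * v p‖ ≤ ‖u p‖ + |sF p.1| * ‖v p‖ := by
      rw [Real.norm_eq_abs, Real.norm_eq_abs, Real.norm_eq_abs]
      calc |u p + sF p.1 * v p| ≤ |u p| + |sF p.1 * v p| := abs_add_le _ _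
        _ = |u p| + |sF p.1| * |v p| := by rw [abs_mul]
    nlinarith [norm_nonneg (u p), norm_nonneg (v p)]

private lemma setIoo_integral_eq_intervalIntegral (f : ℝ → ℝ) :
    (∫ t, f t ∂μI) = ∫ t in (0:ℝ)..1, f t := by
  rw [intervalIntegral.integral_of_le zero_le_one, integral_Ioc_eq_integral_Ioo]

private lemma rex19_eq (y : Fin 2 → ℝ) : rex19 y = C1ex19⁻¹ * hF (y 0) := rfl

private lemma mass_rex19 : (∫ y in unitCell 2, rex19 y) = 1 := by
  rw [integral_unitCell_eq]
  have hint : Integrable (fun p : ℝ × ℝ => C1ex19⁻¹ * hF p.1) (μI.prod μI) := by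
    have := integrable_aux (fun p => C1ex19⁻¹ * hF p.1) (fun _ => 0)
      (continuous_const.mul (continuous_hF.comp continuous_fst)) continuous_const
    simpa using this
  have heq : (fun p : ℝ × ℝ => rex19 (mve p)) = fun p => C1ex19⁻¹ * hF p.1 := rfl
  rw [heq, MeasureTheory.integral_prod _ hint]
  have hin : ∀ t : ℝ, (∫ _ : ℝ, C1ex19⁻¹ * hF t ∂μI) = C1ex19⁻¹ * hF t := by
    intro t
    rw [MeasureTheory.integral_const]
    simp [Measure.restrict_apply_univ]
  simp only [hin]
  rw [setIoo_integral_eq_intervalIntegral, intervalIntegral.integral_const_mul, ← C1_eq]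
  exact inv_mul_cancel₀ C1_pos.ne'

/-! ### The two pieces of the integrand -/

private def G1f (φ : (Fin 2 → ℝ) → ℝ) (p : ℝ × ℝ) : ℝ :=
  C1ex19⁻¹ * (Real.exp (Kex19 p.1) * pd (pd φ 0) 0 (mve p)) +
    sF p.1 * (C1ex19⁻¹ * (hF p.1 * pd φ 0 (mve p)))

private def G2f (φ : (Fin 2 → ℝ) → ℝ) (p : ℝ × ℝ) : ℝ :=
  C1ex19⁻¹ * (hF p.1 * (Real.sin (2 * Real.pi * p.1) * pd (pd φ 0) 1 (mve p)
    + (2 + Real.cos (Real.pi * p.1) ^ 2) * pd (pd φ 1) 1 (mve p))) +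
    sF p.1 * (C1ex19⁻¹ * (hF p.1 * pd φ 1 (mve p)))

end Ex19Aux
/-- the function `r` above is the invariant measure associated with
the coefficients of the first numerical experiment: it is `ℤ²`-periodic and positive,
has unit mass over the unit cell, and satisfies
`∫_Y r (A:D²φ + b·∇φ) = 0` for every `C²` `ℤ²`-periodic test function `φ`. -/
theorem stmt_19 :
    IsPeriodic rex19 ∧ (∀ y : Fin 2 → ℝ, 0 < rex19 y) ∧
      (∫ y in unitCell 2, rex19 y) = 1 ∧
      ∀ φ : (Fin 2 → ℝ) → ℝ, ContDiff ℝ 2 φ → IsPeriodic φ →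
        (∫ y in unitCell 2,
          rex19 y * (frobInner (Aex19 y) (hess φ y) + dotc (bex19 y) (grad φ y))) = 0 := by
  refine ⟨?_, ?_, mass_rex19, ?_⟩
  · -- periodicity
    intro x k
    rw [rex19_eq, rex19_eq]
    congr 1
    have h0 : (x + fun i => ((k i : ℤ) : ℝ)) 0 = x 0 + ((k 0 : ℤ) : ℝ) := rfl
    rw [h0]
    have := (hF_per.int_mul (k 0)) (x 0)
    simpa using this
  · -- positivity
    intro y
    rw [rex19_eq]
    exact mul_pos (inv_pos.2 C1_pos) (hF_pos _)
  · -- the very weak formulation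
    intro φ hφ hper
    have hd : Differentiable ℝ φ := hφ.differentiable (by norm_num)
    have hp0 : ContDiff ℝ 1 (pd φ 0) := contDiff_pd hφ 0
    have hp1 : ContDiff ℝ 1 (pd φ 1) := contDiff_pd hφ 1
    have hd0 : Differentiable ℝ (pd φ 0) := hp0.differentiable (by norm_num)
    have hd1 : Differentiable ℝ (pd φ 1) := hp1.differentiable (by norm_num)
    have hcp0 : Continuous (pd φ 0) := hd0.continuous
    have hcp1 : Continuous (pd φ 1) := hd1.continuous
    have hcq00 : Continuous (pd (pd φ 0) 0) := continuous_pd hp0 0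
    have hcq10 : Continuous (pd (pd φ 0) 1) := continuous_pd hp0 1
    have hcq11 : Continuous (pd (pd φ 1) 1) := continuous_pd hp1 1
    have hvec0 : (fun i => (((![1,0] : Fin 2 → ℤ)) i : ℝ)) = ![(1:ℝ),0] := by
      funext i; fin_cases i <;> simp
    have hvec1 : (fun i => (((![0,1] : Fin 2 → ℤ)) i : ℝ)) = ![(0:ℝ),1] := by
      funext i; fin_cases i <;> simp
    have hshift0 : ∀ y : Fin 2 → ℝ, φ (y + ![(1:ℝ), 0]) = φ y := by
      intro y; have := hper y ![1,0]; rwa [hvec0] at this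
    have hshift1 : ∀ y : Fin 2 → ℝ, φ (y + ![(0:ℝ), 1]) = φ y := by
      intro y; have := hper y ![0,1]; rwa [hvec1] at this
    have hm10 : ∀ σ : ℝ, mve (1, σ) = mve (0, σ) + ![(1:ℝ),0] := by
      intro σ; funext i; fin_cases i <;> simp [mve]
    have hm01 : ∀ t : ℝ, mve (t, 1) = mve (t, 0) + ![(0:ℝ),1] := by
      intro t; funext i; fin_cases i <;> simp [mve]
    -- integrability of the two pieces
    have hiG1 : Integrable (G1f φ) (μI.prod μI) := by
      unfold G1f
      apply integrable_aux
      · exact continuous_const.mul ((Real.continuous_exp.comp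
          (continuous_K.comp continuous_fst)).mul (hcq00.comp continuous_mve))
      · exact continuous_const.mul ((continuous_hF.comp continuous_fst).mul
          (hcp0.comp continuous_mve))
    have hiG2 : Integrable (G2f φ) (μI.prod μI) := by
      unfold G2f
      apply integrable_aux
      · refine continuous_const.mul ((continuous_hF.comp continuous_fst).mul
          (Continuous.add ?_ ?_))
        · exact ((Real.continuous_sin.comp (continuous_const.mul continuous_fst)).mul
            (hcq10.comp continuous_mve))
        · exact ((continuous_const.add ((Real.continuous_cos.comp
            (continuous_const.mul continuous_fst)).pow 2)).mul (hcq11.comp continuous_mve))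
      · exact continuous_const.mul ((continuous_hF.comp continuous_fst).mul
          (hcp1.comp continuous_mve))
    -- vanishing of the second piece
    have hI2 : (∫ p, G2f φ p ∂(μI.prod μI)) = 0 := by
      rw [MeasureTheory.integral_prod _ hiG2]
      have inner : ∀ t : ℝ, (∫ σ, G2f φ (t, σ) ∂μI) = 0 := by
        intro t
        rw [setIoo_integral_eq_intervalIntegral]
        have hderiv : ∀ σ ∈ Set.uIcc (0:ℝ) 1, HasDerivAt (fun σ =>
            C1ex19⁻¹ * (hF t * (Real.sin (2 * Real.pi * t) * pd φ 0 (mve (t, σ))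
              + (2 + Real.cos (Real.pi * t) ^ 2) * pd φ 1 (mve (t, σ))))
            + sF t * (C1ex19⁻¹ * (hF t * φ (mve (t, σ)))))
            (G2f φ (t, σ)) σ := by
          intro σ _
          have h1 := hasDerivAt_comp_snd hd0 t σ
          have h2 := hasDerivAt_comp_snd hd1 t σ
          have h3 := hasDerivAt_comp_snd hd t σ
          have hD := (HasDerivAt.const_mul C1ex19⁻¹ (HasDerivAt.const_mul (hF t)
              ((HasDerivAt.const_mul (Real.sin (2 * Real.pi * t)) h1).add
                (HasDerivAt.const_mul (2 + Real.cos (Real.pi * t) ^ 2) h2)))).add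
            (HasDerivAt.const_mul (sF t) (HasDerivAt.const_mul C1ex19⁻¹
              (HasDerivAt.const_mul (hF t) h3)))
          exact hD
        have hcont : Continuous (fun σ => G2f φ (t, σ)) := by
          have hmc : Continuous (fun σ : ℝ => mve (t, σ)) :=
            continuous_mve.comp (continuous_const.prodMk continuous_id)
          have hval : (fun σ => G2f φ (t, σ)) = fun σ =>
              C1ex19⁻¹ * (hF t * (Real.sin (2 * Real.pi * t) * pd (pd φ 0) 1 (mve (t, σ))
                + (2 + Real.cos (Real.pi * t) ^ 2) * pd (pd φ 1) 1 (mve (t, σ))))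
              + sF t * (C1ex19⁻¹ * (hF t * pd φ 1 (mve (t, σ)))) := rfl
          rw [hval]
          refine Continuous.add (continuous_const.mul (continuous_const.mul
            (Continuous.add ?_ ?_))) (continuous_const.mul (continuous_const.mul
            (continuous_const.mul (hcp1.comp hmc))))
          · exact continuous_const.mul (hcq10.comp hmc)
          · exact continuous_const.mul (hcq11.comp hmc)
        rw [intervalIntegral.integral_eq_sub_of_hasDerivAt hderiv
          (hcont.intervalIntegrable 0 1)]
        simp only [hm01 t, hshift1, pd_shift hd ![(0:ℝ),1] hshift1]
        ring
      simp only [inner, integral_zero]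
    -- vanishing of the first piece
    have hI1 : (∫ p, G1f φ p ∂(μI.prod μI)) = 0 := by
      rw [MeasureTheory.integral_prod_symm _ hiG1]
      have inner : ∀ σ : ℝ, (∫ t, G1f φ (t, σ) ∂μI) = 0 := by
        intro σ
        rw [setIoo_integral_eq_intervalIntegral]
        have hmc : Continuous (fun u : ℝ => mve (u, σ)) :=
          continuous_mve.comp (continuous_id.prodMk continuous_const)
        have hderiv : ∀ t : ℝ, Real.sin (2 * Real.pi * t) ≠ 0 →
            HasDerivAt (fun u => C1ex19⁻¹ * (Real.exp (Kex19 u) * pd φ 0 (mve (u, σ))))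
              (G1f φ (t, σ)) t := by
          intro t ht
          have hD := HasDerivAt.const_mul C1ex19⁻¹
            ((hasDerivAt_expK ht).mul (hasDerivAt_comp_fst hd0 t σ))
          convert hD using 1
          · rfl
          · rfl
          · rfl
          have hfs := hF_mul_sF t
          simp only [G1f]
          linear_combination (C1ex19⁻¹ * pd φ 0 (mve (t, σ))) * hfs
        have hsin1 : ∀ t ∈ Set.Ioo (0:ℝ) (1/2 : ℝ), Real.sin (2 * Real.pi * t) ≠ 0 := by
          rintro t ⟨h1, h2⟩
          have hp := Real.pi_pos
          have hx : 0 < 2 * Real.pi * t := by positivity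
          have h3 : 2 * Real.pi * t < Real.pi := by nlinarith
          exact (Real.sin_pos_of_pos_of_lt_pi hx h3).ne'
        have hsin2 : ∀ t ∈ Set.Ioo (1/2 : ℝ) (1:ℝ), Real.sin (2 * Real.pi * t) ≠ 0 := by
          rintro t ⟨h1, h2⟩
          have hp := Real.pi_pos
          have h0 : 0 < 2 * Real.pi * t - Real.pi := by nlinarith
          have h3 : 2 * Real.pi * t - Real.pi < Real.pi := by nlinarith
          have h4 := Real.sin_pos_of_pos_of_lt_pi h0 h3
          rw [Real.sin_sub_pi] at h4
          exact (by linarith : Real.sin (2 * Real.pi * t) < 0).ne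
        have hcontV : Continuous (fun u => C1ex19⁻¹ *
            (Real.exp (Kex19 u) * pd φ 0 (mve (u, σ)))) :=
          continuous_const.mul ((Real.continuous_exp.comp continuous_K).mul (hcp0.comp hmc))
        have hB : Continuous (fun u => |C1ex19⁻¹ * (Real.exp (Kex19 u) * pd (pd φ 0) 0 (mve (u, σ)))|
            + |C1ex19⁻¹ * (hF u * pd φ 0 (mve (u, σ)))|) := by
          apply Continuous.add
          · exact (continuous_const.mul ((Real.continuous_exp.comp continuous_K).mul
              (hcq00.comp hmc))).abs
          · exact (continuous_const.mul ((continuous_hF).mul (hcp0.comp hmc))).abs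
        have hms : Measurable (fun u => G1f φ (u, σ)) := by
          unfold G1f
          apply Measurable.add
          · exact (continuous_const.mul ((Real.continuous_exp.comp continuous_K).mul
              (hcq00.comp hmc))).measurable
          · exact measurable_sF.mul (continuous_const.mul ((continuous_hF).mul
              (hcp0.comp hmc))).measurable
        have hbd : ∀ u : ℝ, ‖G1f φ (u, σ)‖ ≤
            |C1ex19⁻¹ * (Real.exp (Kex19 u) * pd (pd φ 0) 0 (mve (u, σ)))|
            + |C1ex19⁻¹ * (hF u * pd φ 0 (mve (u, σ)))| := by
          intro u
          rw [Real.norm_eq_abs]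
          unfold G1f
          have ha := abs_add_le (C1ex19⁻¹ * (Real.exp (Kex19 u) * pd (pd φ 0) 0 (mve (u, σ))))
            (sF u * (C1ex19⁻¹ * (hF u * pd φ 0 (mve (u, σ)))))
          have hb : |sF u * (C1ex19⁻¹ * (hF u * pd φ 0 (mve (u, σ))))| ≤
              |C1ex19⁻¹ * (hF u * pd φ 0 (mve (u, σ)))| := by
            rw [abs_mul]
            have := abs_sign_le (Real.sin (2 * Real.pi * u))
            have h0 := abs_nonneg (C1ex19⁻¹ * (hF u * pd φ 0 (mve (u, σ))))
            calc |sF u| * |C1ex19⁻¹ * (hF u * pd φ 0 (mve (u, σ)))|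
                ≤ 1 * |C1ex19⁻¹ * (hF u * pd φ 0 (mve (u, σ)))| := by
                  apply mul_le_mul_of_nonneg_right _ h0
                  exact this
              _ = _ := one_mul _
          linarith
        have hint : ∀ a b : ℝ, IntervalIntegrable (fun u => G1f φ (u, σ)) volume a b := by
          intro a b
          exact IntervalIntegrable.mono_fun' (hB.intervalIntegrable a b)
            hms.aestronglyMeasurable (Filter.Eventually.of_forall hbd)
        have e1 := intervalIntegral.integral_eq_sub_of_hasDerivAt_of_le
          (by norm_num : (0:ℝ) ≤ 1/2) hcontV.continuousOn
          (fun u hu => hderiv u (hsin1 u hu)) (hint 0 (1/2))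
        have e2 := intervalIntegral.integral_eq_sub_of_hasDerivAt_of_le
          (by norm_num : (1/2:ℝ) ≤ 1) hcontV.continuousOn
          (fun u hu => hderiv u (hsin2 u hu)) (hint (1/2) 1)
        have hsplit := intervalIntegral.integral_add_adjacent_intervals
          (hint 0 (1/2)) (hint (1/2) 1)
        rw [← hsplit, e1, e2]
        simp only [hm10 σ, pd_shift hd ![(1:ℝ),0] hshift0, K_one, K_zero]
        ring
      simp only [inner, integral_zero]
    -- pointwise expansion
    have hexp : ∀ p : ℝ × ℝ,
        rex19 (mve p) * (frobInner (Aex19 (mve p)) (hess φ (mve p))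
          + dotc (bex19 (mve p)) (grad φ (mve p))) = G1f φ p + G2f φ p := by
      intro p
      have hsym := pd_symm hφ (mve p)
      have hrex : rex19 (mve p) = C1ex19⁻¹ * hF p.1 := rfl
      have hfr : frobInner (Aex19 (mve p)) (hess φ (mve p)) =
          aF p.1 * pd (pd φ 0) 0 (mve p)
          + (1/2) * Real.sin (2 * Real.pi * p.1) * pd (pd φ 1) 0 (mve p)
          + (1/2) * Real.sin (2 * Real.pi * p.1) * pd (pd φ 0) 1 (mve p)
          + (2 + Real.cos (Real.pi * p.1) ^ 2) * pd (pd φ 1) 1 (mve p) := by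
        simp [frobInner, hess, Aex19, aF, mve, Fin.sum_univ_two]
        ring
      have hdot : dotc (bex19 (mve p)) (grad φ (mve p)) =
          sF p.1 * pd φ 0 (mve p) + sF p.1 * pd φ 1 (mve p) := by
        simp [dotc, grad, bex19, sF, mve, Fin.sum_univ_two]
      rw [hrex, hfr, hdot, hsym]
      have h1 := hF_mul_aF p.1
      simp only [G1f, G2f]
      linear_combination (C1ex19⁻¹ * pd (pd φ 0) 0 (mve p)) * h1
    rw [integral_unitCell_eq]
    rw [MeasureTheory.integral_congr_ae (Filter.Eventually.of_forall hexp)]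
    rw [MeasureTheory.integral_add hiG1 hiG2, hI1, hI2, add_zero]
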